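/- Let W be a finite-dimensional complex vector space, let f ≥ 1, and let σ be a permutation of {1,…,f}. Consider the linear automorphism T_σ of the f-fold tensor power W^{⊗f} determined by T_σ(w₁ ⊗ ⋯ ⊗ w_f) = w_{σ⁻¹(1)} ⊗ ⋯ ⊗ w_{σ⁻¹(f)}. Then the trace of T_σ equals (dim W)^{c(σ)}, where c(σ) is the number of orbits (cycles, counting fixed points) of σ on {1,…,f}. -/

import Mathlib

open TensorProduct PiTensorProduct

section Aux

variable {f n : ℕ}

/-- A function invariant under `τ` is invariant under all natural powers of `τ`. -/
lemma invariant_pow {κ α : Type*} (τ : Equiv.Perm α) (g : α → κ)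
    (hτ : ∀ x, g (τ x) = g x) : ∀ (k : ℕ) (x), g ((τ ^ k) x) = g x := by
  intro k
  induction k with
  | zero => simp
  | succ m ih =>
    intro x
    rw [pow_succ, Equiv.Perm.mul_apply, ih, hτ]

/-- A function invariant under `σ` is invariant under all integer powers of `σ`. -/
lemma invariant_zpow {κ α : Type*} {σ : Equiv.Perm α} {g : α → κ}
    (hg : ∀ x, g (σ x) = g x) : ∀ (k : ℤ) (x), g ((σ ^ k) x) = g x := by
  intro k x
  cases k with
  | ofNat m => simpa using invariant_pow σ g hg m x
  | negSucc m =>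
    have h := invariant_pow σ g hg (m + 1) ((σ ^ (m + 1))⁻¹ x)
    rw [show ∀ y, (σ ^ (m + 1)) ((σ ^ (m + 1))⁻¹ y) = y from
      fun y => (σ ^ (m + 1)).apply_symm_apply y] at h
    rw [zpow_negSucc]
    exact h.symm

/-- Counting functions invariant under a permutation: there are
`n ^ (number of orbits)` of them. -/
lemma card_invariant_functions (σ : Equiv.Perm (Fin f)) :
    Fintype.card {g : Fin f → Fin n // ∀ x, g (σ x) = g x}
      = n ^ (Multiset.card σ.cycleType + (f - σ.support.card)) := by
  classical
  -- chosen point in the support of each cycle factor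
  have hne : ∀ c : σ.cycleFactorsFinset, (c : Equiv.Perm (Fin f)).support.Nonempty := by
    intro c
    have hc := (Equiv.Perm.mem_cycleFactorsFinset_iff.mp c.2).1
    rw [Finset.nonempty_iff_ne_empty]
    intro h
    exact hc.ne_one (Equiv.Perm.support_eq_empty_iff.mp h)
  set pt : σ.cycleFactorsFinset → Fin f :=
    fun c => (c : Equiv.Perm (Fin f)).support.min' (hne c) with hpt_def
  have hpt : ∀ c : σ.cycleFactorsFinset, pt c ∈ (c : Equiv.Perm (Fin f)).support :=
    fun c => Finset.min'_mem _ _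
  have hptσ : ∀ c : σ.cycleFactorsFinset, pt c ∈ σ.support := by
    intro c
    have h2 := (Equiv.Perm.mem_cycleFactorsFinset_iff.mp c.2).2 (pt c) (hpt c)
    have h3 : (c : Equiv.Perm (Fin f)) (pt c) ≠ pt c :=
      Equiv.Perm.mem_support.mp (hpt c)
    exact Equiv.Perm.mem_support.mpr (h2 ▸ h3)
  have hptcyc : ∀ c : σ.cycleFactorsFinset, σ.cycleOf (pt c) = c :=
    fun c => (Equiv.Perm.cycle_is_cycleOf (hpt c) c.2).symm
  let e : {g : Fin f → Fin n // ∀ x, g (σ x) = g x} ≃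
      ((σ.cycleFactorsFinset ⊕ (σ.supportᶜ : Finset (Fin f))) → Fin n) :=
    { toFun := fun g => Sum.elim (fun c => g.1 (pt c)) (fun x => g.1 x.1)
      invFun := fun h =>
        ⟨fun x => if hx : x ∈ σ.support then
            h (Sum.inl ⟨σ.cycleOf x, Equiv.Perm.cycleOf_mem_cycleFactorsFinset_iff.mpr hx⟩)
          else h (Sum.inr ⟨x, by simpa using hx⟩), by
          intro x
          by_cases hx : x ∈ σ.support
          · have hx' : σ x ∈ σ.support := Equiv.Perm.apply_mem_support.mpr hx
            simp only [dif_pos hx', dif_pos hx]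
            congr 2
            exact Subtype.ext (Equiv.Perm.cycleOf_self_apply σ x)
          · have hfix : σ x = x := Equiv.Perm.notMem_support.mp hx
            simp only [hfix]⟩
      left_inv := by
        intro g
        apply Subtype.ext
        funext x
        by_cases hx : x ∈ σ.support
        · simp only [dif_pos hx, Sum.elim_inl]
          have hmem : pt ⟨σ.cycleOf x,
              Equiv.Perm.cycleOf_mem_cycleFactorsFinset_iff.mpr hx⟩ ∈ (σ.cycleOf x).support :=
            hpt ⟨σ.cycleOf x, Equiv.Perm.cycleOf_mem_cycleFactorsFinset_iff.mpr hx⟩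
          have hsc : σ.SameCycle x (pt ⟨σ.cycleOf x,
              Equiv.Perm.cycleOf_mem_cycleFactorsFinset_iff.mpr hx⟩) :=
            (Equiv.Perm.mem_support_cycleOf_iff.mp hmem).1
          obtain ⟨k, hk⟩ := hsc
          rw [← hk]
          exact invariant_zpow g.2 k x
        · simp only [dif_neg hx, Sum.elim_inr]
      right_inv := by
        intro h
        funext y
        cases y with
        | inl c =>
          simp only [Sum.elim_inl, dif_pos (hptσ c)]
          exact congrArg (fun z => h (Sum.inl z)) (Subtype.ext (hptcyc c))
        | inr x =>
          have hx : x.1 ∉ σ.support := Finset.mem_compl.mp x.2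
          simp only [Sum.elim_inr, dif_neg hx] }
  rw [Fintype.card_congr e]
  rw [Fintype.card_fun, Fintype.card_sum, Fintype.card_coe, Fintype.card_coe,
    Fintype.card_fin]
  congr 2
  · rw [Equiv.Perm.cycleType_def, Multiset.card_map]
    rfl
  · rw [Finset.card_compl, Fintype.card_fin]

end Aux

/-- For `W` a finite-dimensional complex vector space, `f ≥ 1`, and `σ` a
permutation of `{1,…,f}`, the trace of the linear automorphism `T_σ` of `W^{⊗f}` permuting the
tensor factors (`T_σ (w₁ ⊗ ⋯ ⊗ w_f) = w_{σ⁻¹(1)} ⊗ ⋯ ⊗ w_{σ⁻¹(f)}`) equals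
`(dim W)^{c(σ)}`, where `c(σ)` is the number of orbits of `σ` on `{1,…,f}`. -/
theorem trace_of_permuting_tensor_factors
    (W : Type) [AddCommGroup W] [Module ℂ W] [FiniteDimensional ℂ W]
    (f : ℕ) (hf : 1 ≤ f) (σ : Equiv.Perm (Fin f)) :
    LinearMap.trace ℂ (⨂[ℂ] _ : Fin f, W)
        ((PiTensorProduct.reindex ℂ (fun _ : Fin f => W) σ).toLinearMap)
      = (Module.finrank ℂ W : ℂ) ^
          (Multiset.card σ.cycleType + (f - σ.support.card)) := by
  classical
  set n := Module.finrank ℂ W with hn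
  set b : Module.Basis (Fin n) ℂ W := Module.finBasis ℂ W with hb
  set tb : (Fin f → Fin n) → (⨂[ℂ] _ : Fin f, W) :=
    fun g => tprod ℂ (fun i => b (g i)) with htb
  -- dual functionals
  set φ : (Fin f → Fin n) → ((⨂[ℂ] _ : Fin f, W) →ₗ[ℂ] ℂ) :=
    fun g => PiTensorProduct.lift
      ((MultilinearMap.mkPiAlgebra ℂ (Fin f) ℂ).compLinearMap
        (fun i => b.coord (g i))) with hφdef
  have hφ : ∀ g g', φ g (tb g') = if g' = g then (1 : ℂ) else 0 := by
    intro g g'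
    simp only [hφdef, htb]
    simp only [PiTensorProduct.lift.tprod, MultilinearMap.compLinearMap_apply,
      MultilinearMap.mkPiAlgebra_apply, Module.Basis.coord_apply, Module.Basis.repr_self]
    by_cases h : g' = g
    · subst h
      simp [Finsupp.single_apply]
    · rw [if_neg h]
      obtain ⟨i, hi⟩ := Function.ne_iff.mp h
      refine Finset.prod_eq_zero (Finset.mem_univ i) ?_
      simp [Finsupp.single_apply, hi]
  -- linear independence
  have hli : LinearIndependent ℂ tb := by
    rw [Fintype.linearIndependent_iff]
    intro c hc g₀
    have h2 := congrArg (φ g₀) hc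
    rw [map_sum, map_zero] at h2
    simp only [map_smul, hφ, smul_eq_mul, mul_ite, mul_one, mul_zero] at h2
    rwa [Finset.sum_ite_eq' Finset.univ g₀ c, if_pos (Finset.mem_univ g₀)] at h2
  -- spanning
  have hsp : ⊤ ≤ Submodule.span ℂ (Set.range tb) := by
    rw [top_le_iff, Submodule.eq_top_iff']
    intro x
    induction x using PiTensorProduct.induction_on with
    | smul_tprod r m =>
      refine Submodule.smul_mem _ _ ?_
      have hexp : (PiTensorProduct.tprod ℂ) m = ∑ p : Fin f → Fin n,
          (∏ i, b.repr (m i) (p i)) • tb p := by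
        calc (PiTensorProduct.tprod ℂ (s := fun _ : Fin f => W)) m
            = PiTensorProduct.tprod ℂ (fun i => ∑ j : Fin n, b.repr (m i) j • b j) := by
              congr 1
              exact funext fun i => (b.sum_repr (m i)).symm
          _ = ∑ p : Fin f → Fin n,
              PiTensorProduct.tprod ℂ (fun i => b.repr (m i) (p i) • b (p i)) :=
            MultilinearMap.map_sum _ _
          _ = ∑ p : Fin f → Fin n, (∏ i, b.repr (m i) (p i)) • tb p :=
            Finset.sum_congr rfl (fun p _ =>
              MultilinearMap.map_smul_univ (PiTensorProduct.tprod ℂ)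
                (fun i => b.repr (m i) (p i)) (fun i => b (p i)))
      rw [hexp]
      refine Submodule.sum_mem _ ?_
      intro p _
      exact Submodule.smul_mem _ _ (Submodule.subset_span ⟨p, rfl⟩)
    | add x y hx hy => exact Submodule.add_mem _ hx hy
  set B : Module.Basis (Fin f → Fin n) ℂ (⨂[ℂ] _ : Fin f, W) := Module.Basis.mk hli hsp with hB
  have hBg : ∀ g, B g = tb g := fun g => Module.Basis.mk_apply hli hsp g
  -- the action of reindex on basis elements
  have hT : ∀ g, (PiTensorProduct.reindex ℂ (fun _ : Fin f => W) σ).toLinearMap (B g)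
      = B (g ∘ σ.symm) := by
    intro g
    rw [hBg, hBg]
    simp only [htb, LinearEquiv.coe_coe]
    exact PiTensorProduct.reindex_tprod σ (fun i => b (g i))
  rw [LinearMap.trace_eq_matrix_trace ℂ B, Matrix.trace]
  have hdiag : ∀ g, Matrix.diag (LinearMap.toMatrix B B
      ((PiTensorProduct.reindex ℂ (fun _ : Fin f => W) σ).toLinearMap)) g
      = if (∀ x, g (σ x) = g x) then (1 : ℂ) else 0 := by
    intro g
    rw [Matrix.diag_apply, LinearMap.toMatrix_apply, hT g, Module.Basis.repr_self,
      Finsupp.single_apply]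
    congr 1
    simp only [eq_iff_iff]
    constructor
    · intro h x
      have h2 := congrFun h (σ x)
      simpa using h2.symm
    · intro h
      funext x
      simpa using (h (σ.symm x)).symm
  rw [Finset.sum_congr rfl (fun g _ => hdiag g)]
  rw [Finset.sum_boole]
  have hcount : (Finset.univ.filter (fun g : Fin f → Fin n => ∀ x, g (σ x) = g x)).card
      = Fintype.card {g : Fin f → Fin n // ∀ x, g (σ x) = g x} := by
    rw [Fintype.card_subtype]
  rw [hcount, card_invariant_functions σ]
  push_cast
  rfl
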